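/- (Probabilistic version of Theorem 1(i).) Let (Ω, ℱ, P) be a probability space and let V_I, V_N : Ω → ℝ be random variables such that the cumulative distribution function F_{V_N}(x) := P(V_N ≤ x) is continuous and strictly increasing on all of ℝ. Let h : ℝ → ℝ → {0,1} → ℝ be such that for each t ∈ {0,1}, h(·,·,t) is strictly increasing in each of its first two arguments separately and continuous in its second argument, and let Q_U : (0,1) → ℝ be a given function (the common quantile function of the individual-level unobservable). Define the random group-level quantiles Y_{I0}(τ_U) := h(Q_U(τ_U), V_I, 0), Y_{Nt}(τ_U) := h(Q_U(τ_U), V_N, t) for t = 0,1, and the counterfactual Y^N_{I1}(τ_U) := h(Q_U(τ_U), V_I, 1). For a real random variable Z let Q_Z(τ) := sInf { x ∈ ℝ : τ ≤ P(Z ≤ x) } and F_Z(y) := P(Z ≤ y). Then for every τ_U*, τ_V* ∈ (0,1) and every τ_U ∈ (0,1): Q_{Y^N_{I1}(τ_U*)}(τ_V*) = Q_{Y_{N1}(τ_U*)}( F_{Y_{N0}(τ_U)}( Q_{Y_{I0}(τ_U)}(τ_V*) ) ). -/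

import Mathlib

open MeasureTheory

/-- The quantile function of a real random variable `Z` under `P`:
`Q_Z(τ) = sInf {x | τ ≤ P(Z ≤ x)}`. -/
noncomputable def quantileFun {Ω : Type*} [MeasurableSpace Ω]
    (P : Measure Ω) (Z : Ω → ℝ) (τ : ℝ) : ℝ :=
  sInf {x : ℝ | τ ≤ (P {ω | Z ω ≤ x}).toReal}

/-- The cumulative distribution function of a real random variable `Z`
under `P`: `F_Z(y) = P(Z ≤ y)`. -/
noncomputable def cdfFun {Ω : Type*} [MeasurableSpace Ω]
    (P : Measure Ω) (Z : Ω → ℝ) (y : ℝ) : ℝ :=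
  (P {ω | Z ω ≤ y}).toReal

open Filter Topology ProbabilityTheory in
/-- The set defining the quantile is nonempty and bounded below for `τ ∈ (0,1)`. -/
lemma quantile_set_props {Ω : Type*} [MeasurableSpace Ω]
    (P : Measure Ω) [IsProbabilityMeasure P] (Z : Ω → ℝ) (hZ : Measurable Z)
    {τ : ℝ} (hτ0 : 0 < τ) (hτ1 : τ < 1) :
    ({x : ℝ | τ ≤ (P {ω | Z ω ≤ x}).toReal}).Nonempty ∧
      BddBelow {x : ℝ | τ ≤ (P {ω | Z ω ≤ x}).toReal} := by
  haveI : IsProbabilityMeasure (P.map Z) := Measure.isProbabilityMeasure_map hZ.aemeasurable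
  have hF : ∀ x : ℝ, (P {ω | Z ω ≤ x}).toReal = cdf (P.map Z) x := by
    intro x
    rw [cdf_eq_real, measureReal_def, Measure.map_apply hZ measurableSet_Iic]
    rfl
  constructor
  · obtain ⟨x, hx⟩ := ((tendsto_cdf_atTop (P.map Z)).eventually
      (eventually_ge_nhds hτ1)).exists
    exact ⟨x, by rw [Set.mem_setOf_eq, hF]; exact hx⟩
  · obtain ⟨x, hx⟩ := ((tendsto_cdf_atBot (P.map Z)).eventually
      (eventually_lt_nhds hτ0)).exists
    refine ⟨x, fun y hy => ?_⟩
    by_contra hxy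
    push_neg at hxy
    have : cdf (P.map Z) y ≤ cdf (P.map Z) x := monotone_cdf _ hxy.le
    rw [Set.mem_setOf_eq, hF] at hy
    linarith

lemma F_mono {Ω : Type*} [MeasurableSpace Ω]
    (P : Measure Ω) [IsProbabilityMeasure P] (Z : Ω → ℝ) {x y : ℝ} (hxy : x ≤ y) :
    (P {ω | Z ω ≤ x}).toReal ≤ (P {ω | Z ω ≤ y}).toReal :=
  ENNReal.toReal_mono (measure_ne_top _ _)
    (measure_mono fun ω hω => le_trans hω hxy)

open Filter Topology in
/-- Quantile of a strictly monotone continuous transform. -/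
lemma quantileFun_comp {Ω : Type*} [MeasurableSpace Ω]
    (P : Measure Ω) [IsProbabilityMeasure P] (Z : Ω → ℝ) (hZ : Measurable Z)
    (g : ℝ → ℝ) (hg : StrictMono g) (hgc : Continuous g)
    {τ : ℝ} (hτ0 : 0 < τ) (hτ1 : τ < 1) :
    quantileFun P (fun ω => g (Z ω)) τ = g (quantileFun P Z τ) := by
  obtain ⟨hA_ne, hA_bdd⟩ := quantile_set_props P Z hZ hτ0 hτ1
  obtain ⟨hA'_ne, hA'_bdd⟩ := quantile_set_props P (fun ω => g (Z ω))
    (hgc.measurable.comp hZ) hτ0 hτ1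
  set A := {x : ℝ | τ ≤ (P {ω | Z ω ≤ x}).toReal} with hA_def
  set A' := {x : ℝ | τ ≤ (P {ω | g (Z ω) ≤ x}).toReal} with hA'_def
  have himg : g '' A ⊆ A' := by
    rintro _ ⟨x, hx, rfl⟩
    have : {ω | g (Z ω) ≤ g x} = {ω | Z ω ≤ x} := by
      ext ω; exact hg.le_iff_le
    simpa [hA'_def, hA_def, this] using hx
  apply le_antisymm
  · calc sInf A' ≤ sInf (g '' A) := csInf_le_csInf hA'_bdd (hA_ne.image g) himg
    _ = g (sInf A) :=
      (hg.monotone.map_csInf_of_continuousAt hgc.continuousAt hA_ne hA_bdd).symm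
  · refine le_csInf hA'_ne fun x hx => ?_
    by_contra hlt
    push_neg at hlt
    have h1 : ∀ᶠ v in 𝓝 (sInf A), x < g v :=
      hgc.continuousAt.eventually (eventually_gt_nhds hlt)
    have h2 : ∀ᶠ v in 𝓝[<] (sInf A), x < g v := h1.filter_mono nhdsWithin_le_nhds
    obtain ⟨v, hv1, hv2⟩ := (h2.and eventually_mem_nhdsWithin).exists
    have hsub : {ω | g (Z ω) ≤ x} ⊆ {ω | Z ω ≤ v} := by
      intro ω hω
      simp only [Set.mem_setOf_eq] at hω ⊢
      by_contra hvZ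
      push_neg at hvZ
      exact absurd (le_trans (hg hvZ).le hω) (not_le.mpr hv1)
    have hvA : v ∈ A := le_trans hx (ENNReal.toReal_mono (measure_ne_top _ _)
      (measure_mono hsub))
    exact absurd (csInf_le hA_bdd hvA) (not_le.mpr hv2)

lemma cdfFun_comp {Ω : Type*} [MeasurableSpace Ω]
    (P : Measure Ω) (Z : Ω → ℝ) (g : ℝ → ℝ) (hg : StrictMono g) (y : ℝ) :
    cdfFun P (fun ω => g (Z ω)) (g y) = cdfFun P Z y := by
  unfold cdfFun
  congr 1
  congr 1
  ext ω
  exact hg.le_iff_le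

lemma quantileFun_cdfFun {Ω : Type*} [MeasurableSpace Ω]
    (P : Measure Ω) (Z : Ω → ℝ)
    (hmono : StrictMono fun x : ℝ => (P {ω | Z ω ≤ x}).toReal) (y : ℝ) :
    quantileFun P Z (cdfFun P Z y) = y := by
  unfold quantileFun cdfFun
  have : {x : ℝ | (P {ω | Z ω ≤ y}).toReal ≤ (P {ω | Z ω ≤ x}).toReal} = Set.Ici y := by
    ext x
    exact hmono.le_iff_le
  rw [this, csInf_Ici]

/- Probabilistic version of Theorem 1(i).  Time periods are encoded by
`Bool` (`false` = period 0, `true` = period 1).  The group-level quantiles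
are the random variables `Y_{I0}(τ_U) = h (Q_U τ_U) V_I false`,
`Y_{Nt}(τ_U) = h (Q_U τ_U) V_N t`, and the counterfactual is
`Y^N_{I1}(τ_U) = h (Q_U τ_U) V_I true`. -/
theorem probabilistic_cic_theorem_one_part_i
    {Ω : Type*} [MeasurableSpace Ω] (P : Measure Ω) [IsProbabilityMeasure P]
    (VI VN : Ω → ℝ) (hVI : Measurable VI) (hVN : Measurable VN)
    (hFVN_cont : Continuous fun x : ℝ => (P {ω | VN ω ≤ x}).toReal)
    (hFVN_mono : StrictMono fun x : ℝ => (P {ω | VN ω ≤ x}).toReal)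
    (h : ℝ → ℝ → Bool → ℝ)
    (hmono_u : ∀ t v, StrictMono fun u => h u v t)
    (hmono_v : ∀ t u, StrictMono fun v => h u v t)
    (hcont_v : ∀ t u, Continuous fun v => h u v t)
    (QU : ℝ → ℝ) :
    ∀ τUstar ∈ Set.Ioo (0:ℝ) 1, ∀ τVstar ∈ Set.Ioo (0:ℝ) 1,
      ∀ τU ∈ Set.Ioo (0:ℝ) 1,
        quantileFun P (fun ω => h (QU τUstar) (VI ω) true) τVstar
          = quantileFun P (fun ω => h (QU τUstar) (VN ω) true)
              (cdfFun P (fun ω => h (QU τU) (VN ω) false)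
                (quantileFun P (fun ω => h (QU τU) (VI ω) false) τVstar)) := by
  rintro τUstar _ τVstar ⟨hV0, hV1⟩ τU _
  set g1 : ℝ → ℝ := fun v => h (QU τUstar) v true with hg1
  set g0 : ℝ → ℝ := fun v => h (QU τU) v false with hg0
  set q : ℝ := quantileFun P VI τVstar with hq_def
  -- left-hand side
  have hLHS : quantileFun P (fun ω => g1 (VI ω)) τVstar = g1 q :=
    quantileFun_comp P VI hVI g1 (hmono_v true _) (hcont_v true _) hV0 hV1
  -- inner quantile
  have hInner : quantileFun P (fun ω => g0 (VI ω)) τVstar = g0 q :=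
    quantileFun_comp P VI hVI g0 (hmono_v false _) (hcont_v false _) hV0 hV1
  -- inner cdf
  have hCdf : cdfFun P (fun ω => g0 (VN ω)) (g0 q) = cdfFun P VN q :=
    cdfFun_comp P VN g0 (hmono_v false _) q
  -- the value c is in (0,1)
  set c : ℝ := cdfFun P VN q with hc_def
  have hc0 : 0 < c := lt_of_le_of_lt ENNReal.toReal_nonneg
    (hFVN_mono (show q - 1 < q by linarith))
  have hc1 : c < 1 := by
    have h1 : c < (P {ω | VN ω ≤ q + 1}).toReal :=
      hFVN_mono (show q < q + 1 by linarith)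
    have h2 : (P {ω | VN ω ≤ q + 1}).toReal ≤ (P (Set.univ : Set Ω)).toReal :=
      ENNReal.toReal_mono (measure_ne_top _ _) (measure_mono (Set.subset_univ _))
    simp only [measure_univ, ENNReal.toReal_one] at h2
    linarith
  have hOuter : quantileFun P (fun ω => g1 (VN ω)) c = g1 (quantileFun P VN c) :=
    quantileFun_comp P VN hVN g1 (hmono_v true _) (hcont_v true _) hc0 hc1
  have hId : quantileFun P VN c = q := quantileFun_cdfFun P VN hFVN_mono q
  rw [hLHS, hInner, hCdf]
  have hfin : quantileFun P (fun ω => h (QU τUstar) (VN ω) true) c = g1 q := by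
    rw [show (fun ω => h (QU τUstar) (VN ω) true) = fun ω => g1 (VN ω) from rfl,
      hOuter, hId]
  rw [hfin]
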